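/- arXiv:1401.6006 — 2 statements merged into one kernel-verified Lean document; each statement's English description precedes it below -/
import Mathlib

section
/- Let V be the algebra of differential polynomials in ℓ variables and let h ∈ V. Then ξ := δh/δu ∈ V^ℓ has self-adjoint Frechet derivative: D_ξ(∂) = D_ξ*(∂), where D_ξ(∂)_{ij} = Σ_n (∂ξ_i/∂u_j^(n)) ∂^n and the adjoint is D_ξ*(∂)_{ij} = Σ_n (-∂)^n ∘ (∂ξ_j/∂u_i^(n)). -/
/-- The total derivative `∂` on `V = F[u_i^(n)]`, with `∂(u_i^(n)) = u_i^(n+1)`. -/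
noncomputable def Del (F : Type) [Field F] (σ : Type) :
    Derivation F (MvPolynomial (σ × ℕ) F) (MvPolynomial (σ × ℕ) F) :=
  MvPolynomial.mkDerivation F (fun p => MvPolynomial.X (p.1, p.2 + 1))

/-- The variational derivative `δh/δu_i = ∑_{n ≥ 0} (-∂)^n (∂h/∂u_i^(n))`. -/
noncomputable def varDer (F : Type) [Field F] (σ : Type)
    (f : MvPolynomial (σ × ℕ) F) (i : σ) : MvPolynomial (σ × ℕ) F :=
  ∑ᶠ n : ℕ, ((-(Del F σ).toLinearMap) ^ n) (MvPolynomial.pderiv (i, n) f)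

open MvPolynomial Finset

variable {F : Type} [Field F] {σ : Type} [DecidableEq σ]

omit [DecidableEq σ] in
lemma del_X (p : σ × ℕ) : Del F σ (X p) = X (p.1, p.2 + 1) :=
  mkDerivation_X _ _ _

lemma pderiv_del_succ (j : σ) (n : ℕ) (f : MvPolynomial (σ × ℕ) F) :
    pderiv (j, n + 1) (Del F σ f) =
      Del F σ (pderiv (j, n + 1) f) + pderiv (j, n) f := by
  have key : ⁅(pderiv (j, n + 1) : Derivation F (MvPolynomial (σ × ℕ) F) _), Del F σ⁆
      = pderiv (j, n) := by
    apply derivation_ext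
    rintro ⟨k, m⟩
    rw [Derivation.commutator_apply, del_X, pderiv_X, pderiv_X, pderiv_X]
    simp only [Pi.single_apply, Prod.mk.injEq]
    split_ifs with h1 h2 h3 h4 h5 h6 <;>
      simp_all [Derivation.map_one_eq_zero]
  have := congrArg (fun (D : Derivation F (MvPolynomial (σ × ℕ) F) (MvPolynomial (σ × ℕ) F)) => D f) key
  simp only [Derivation.commutator_apply] at this
  linear_combination (norm := module) this

lemma pderiv_del_zero (j : σ) (f : MvPolynomial (σ × ℕ) F) :
    pderiv (j, 0) (Del F σ f) = Del F σ (pderiv (j, 0) f) := by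
  have key : ⁅(pderiv (j, 0) : Derivation F (MvPolynomial (σ × ℕ) F) _), Del F σ⁆
      = 0 := by
    apply derivation_ext
    rintro ⟨k, m⟩
    rw [Derivation.commutator_apply, del_X, pderiv_X, pderiv_X]
    simp only [Pi.single_apply, Prod.mk.injEq]
    split_ifs with h1 h2 h3 <;>
      simp_all [Derivation.map_one_eq_zero]
  have := congrArg (fun (D : Derivation F (MvPolynomial (σ × ℕ) F) (MvPolynomial (σ × ℕ) F)) => D f) key
  simp only [Derivation.commutator_apply, Derivation.zero_apply] at this
  linear_combination (norm := module) this

/-- `pd p n k f = ∂f/∂u_p^(n-k)` if `k ≤ n`, else `0`. -/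
noncomputable def pd (p : σ) (n k : ℕ) (f : MvPolynomial (σ × ℕ) F) :
    MvPolynomial (σ × ℕ) F :=
  if k ≤ n then pderiv (p, n - k) f else 0

lemma pd_del (p : σ) (n k : ℕ) (f : MvPolynomial (σ × ℕ) F) :
    pd p n k (Del F σ f) = Del F σ (pd p n k f) + pd p n (k + 1) f := by
  unfold pd
  by_cases h1 : k + 1 ≤ n
  · have h2 : k ≤ n := by omega
    have h3 : n - k = (n - (k + 1)) + 1 := by omega
    simp only [if_pos h1, if_pos h2, h3]
    exact pderiv_del_succ p (n - (k+1)) f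
  · by_cases h2 : k ≤ n
    · have h3 : n - k = 0 := by omega
      simp only [if_pos h2, if_neg h1, h3, add_zero]
      exact pderiv_del_zero p f
    · simp [if_neg h1, if_neg h2]
      intro h; exact absurd h (by omega)

lemma pascal_sum {M : Type} [AddCommGroup M] (m : ℕ) (a : ℕ → M) :
    ∑ k ∈ range (m + 1), (m.choose k : ℤ) • a k
      + ∑ k ∈ range (m + 1), (m.choose k : ℤ) • a (k + 1)
      = ∑ k ∈ range (m + 2), ((m + 1).choose k : ℤ) • a k := by
  rw [Finset.sum_range_succ' (fun k => ((m+1).choose k : ℤ) • a k) (m+1)]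
  rw [Finset.sum_range_succ' (fun k => (m.choose k : ℤ) • a k) m]
  rw [Finset.sum_range_succ (fun k => (m.choose k : ℤ) • a (k+1)) m]
  simp only [Nat.choose_succ_succ, Nat.choose_zero_right, Nat.cast_add, add_smul,
    Finset.sum_add_distrib, Nat.cast_one, one_smul, Nat.choose_self]
  rw [Finset.sum_range_succ (fun k => (m.choose k : ℤ) • a (k+1)) m,
      Finset.sum_range_succ (fun k => (m.choose (k+1) : ℤ) • a (k+1)) m]
  simp only [Nat.choose_self, Nat.choose_succ_self, Nat.cast_zero, zero_smul, add_zero,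
    Nat.cast_one, one_smul]
  abel

omit [DecidableEq σ] in
lemma pow_apply_del (t : ℕ) (x : MvPolynomial (σ × ℕ) F) :
    ((Del F σ).toLinearMap ^ t) (Del F σ x) = ((Del F σ).toLinearMap ^ (t + 1)) x := by
  rw [pow_succ, Module.End.mul_apply]
  rfl

lemma pderiv_del_pow (p : σ) (n : ℕ) : ∀ (m : ℕ) (f : MvPolynomial (σ × ℕ) F),
    pderiv (p, n) (((Del F σ).toLinearMap ^ m) f) =
      ∑ k ∈ range (m + 1), (m.choose k : ℤ) •
        ((Del F σ).toLinearMap ^ (m - k)) (pd p n k f) := by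
  intro m
  induction m with
  | zero => intro f; simp [pd]
  | succ m ih =>
    intro f
    rw [pow_succ, Module.End.mul_apply]
    have : (Del F σ).toLinearMap f = Del F σ f := rfl
    rw [this, ih (Del F σ f)]
    have step : ∀ k ∈ range (m + 1),
        (m.choose k : ℤ) • ((Del F σ).toLinearMap ^ (m - k)) (pd p n k (Del F σ f))
        = (m.choose k : ℤ) • ((Del F σ).toLinearMap ^ ((m + 1) - k)) (pd p n k f)
          + (m.choose k : ℤ) • ((Del F σ).toLinearMap ^ ((m + 1) - (k + 1))) (pd p n (k + 1) f) := by
      intro k hk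
      rw [mem_range] at hk
      rw [pd_del, map_add, smul_add]
      congr 2
      · rw [pow_apply_del, (by omega : (m - k) + 1 = (m + 1) - k)]
      · rw [Nat.succ_sub_succ]
    rw [Finset.sum_congr rfl step, Finset.sum_add_distrib]
    exact pascal_sum m (fun k => ((Del F σ).toLinearMap ^ ((m + 1) - k)) (pd p n k f))

lemma del_pow_mul : ∀ (m : ℕ) (a b : MvPolynomial (σ × ℕ) F),
    ((Del F σ).toLinearMap ^ m) (a * b) =
      ∑ k ∈ range (m + 1), (m.choose k : ℤ) •
        (((Del F σ).toLinearMap ^ (m - k)) a * ((Del F σ).toLinearMap ^ k) b) := by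
  intro m
  induction m with
  | zero => intro a b; simp
  | succ m ih =>
    intro a b
    have hL : (Del F σ).toLinearMap (a * b) = Del F σ a * b + a * Del F σ b := by
      show Del F σ (a * b) = _
      rw [Derivation.leibniz, smul_eq_mul, smul_eq_mul]; ring
    rw [pow_succ, Module.End.mul_apply, hL, map_add, ih, ih]
    have s1 : ∀ k ∈ range (m + 1),
        (m.choose k : ℤ) • (((Del F σ).toLinearMap ^ (m - k)) a * ((Del F σ).toLinearMap ^ k) (Del F σ b))
        = (m.choose k : ℤ) • (((Del F σ).toLinearMap ^ ((m + 1) - (k + 1))) a * ((Del F σ).toLinearMap ^ (k + 1)) b) := by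
      intro k hk
      rw [mem_range] at hk
      rw [pow_apply_del, Nat.succ_sub_succ]
    have s2 : ∀ k ∈ range (m + 1),
        (m.choose k : ℤ) • (((Del F σ).toLinearMap ^ (m - k)) (Del F σ a) * ((Del F σ).toLinearMap ^ k) b)
        = (m.choose k : ℤ) • (((Del F σ).toLinearMap ^ ((m + 1) - k)) a * ((Del F σ).toLinearMap ^ k) b) := by
      intro k hk
      rw [mem_range] at hk
      rw [pow_apply_del, (by omega : (m - k) + 1 = (m + 1) - k)]
    rw [Finset.sum_congr rfl s1, Finset.sum_congr rfl s2]
    exact pascal_sum m (fun k => ((Del F σ).toLinearMap ^ ((m + 1) - k)) a * ((Del F σ).toLinearMap ^ k) b)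

omit [DecidableEq σ] in
lemma neg_del_pow_apply (n : ℕ) (x : MvPolynomial (σ × ℕ) F) :
    ((-(Del F σ).toLinearMap) ^ n) x = (-1 : ℤ) ^ n • ((Del F σ).toLinearMap ^ n) x := by
  induction n generalizing x with
  | zero => simp
  | succ n ih =>
    rw [pow_succ, Module.End.mul_apply, LinearMap.neg_apply, map_neg, ih,
      show ((Del F σ).toLinearMap x) = Del F σ x from rfl, pow_apply_del,
      pow_succ (-1 : ℤ), mul_neg_one, neg_smul]
lemma G_rec (q r s : ℕ) :
    ∑ k ∈ range (q + 2), (-1 : ℤ) ^ k * ((q + 1).choose k) * ((r + k).choose s)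
      = ∑ k ∈ range (q + 1), (-1 : ℤ) ^ k * (q.choose k) * ((r + k).choose s)
        - ∑ k ∈ range (q + 1), (-1 : ℤ) ^ k * (q.choose k) * (((r + 1) + k).choose s) := by
  rw [Finset.sum_range_succ' (fun k => (-1 : ℤ) ^ k * ((q + 1).choose k) * ((r + k).choose s)) (q + 1)]
  rw [Finset.sum_range_succ' (fun k => (-1 : ℤ) ^ k * (q.choose k) * ((r + k).choose s)) q]
  rw [Finset.sum_range_succ (fun k => (-1 : ℤ) ^ k * (q.choose k) * (((r + 1) + k).choose s)) q]
  have e1 : ∀ k, (-1 : ℤ) ^ (k + 1) * ((q + 1).choose (k + 1)) * ((r + (k + 1)).choose s)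
      = -((-1 : ℤ) ^ k * (q.choose k) * (((r + 1) + k).choose s))
        + -((-1 : ℤ) ^ k * (q.choose (k + 1)) * (((r + 1) + k).choose s)) := by
    intro k
    have : r + (k + 1) = (r + 1) + k := by omega
    rw [this, Nat.choose_succ_succ, pow_succ]
    push_cast
    ring
  have e2 : ∀ k, (-1 : ℤ) ^ (k + 1) * (q.choose (k + 1)) * ((r + (k + 1)).choose s)
      = -((-1 : ℤ) ^ k * (q.choose (k + 1)) * (((r + 1) + k).choose s)) := by
    intro k
    have : r + (k + 1) = (r + 1) + k := by omega
    rw [this, pow_succ]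
    ring
  simp only [e1, e2, Finset.sum_add_distrib, Finset.sum_neg_distrib]
  rw [Finset.sum_range_succ (fun k => (-1 : ℤ) ^ k * (q.choose k) * (((r + 1) + k).choose s)) q,
    Finset.sum_range_succ (fun k => (-1 : ℤ) ^ k * (q.choose (k + 1)) * (((r + 1) + k).choose s)) q]
  simp only [Nat.choose_succ_self, Nat.cast_zero, mul_zero, zero_mul, neg_zero, add_zero,
    Nat.choose_zero_right, Nat.cast_one, mul_one, one_mul, pow_zero, Nat.choose_self]
  ring

lemma fin_diff : ∀ q r s : ℕ,
    ∑ k ∈ range (q + 1), (-1 : ℤ) ^ k * (q.choose k) * ((r + k).choose s)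
      = (-1) ^ q * (if q ≤ s then (r.choose (s - q) : ℤ) else 0) := by
  intro q
  induction q with
  | zero => intro r s; simp
  | succ q ih =>
    intro r s
    rw [show q + 1 + 1 = q + 2 from rfl, G_rec, ih, ih]
    rcases lt_trichotomy q s with hlt | rfl | hgt
    · obtain ⟨t, rfl⟩ : ∃ t, s = q + (t + 1) := ⟨s - q - 1, by omega⟩
      rw [if_pos (by omega), if_pos (by omega), if_pos (by omega)]
      have h1 : q + (t + 1) - q = t + 1 := by omega
      have h2 : q + (t + 1) - (q + 1) = t := by omega
      rw [h1, h2, Nat.choose_succ_succ (r) t]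
      push_cast
      ring
    · rw [if_pos le_rfl, if_pos le_rfl, if_neg (by omega)]
      simp
    · rw [if_neg (by omega), if_neg (by omega), if_neg (by omega)]
      simp

lemma pderiv_pderiv_comm (p q : σ × ℕ) (f : MvPolynomial (σ × ℕ) F) :
    pderiv p (pderiv q f) = pderiv q (pderiv p f) := by
  induction f using MvPolynomial.induction_on with
  | C a => simp
  | add f g hf hg => simp [hf, hg]
  | mul_X f s hf =>
    have hz : ∀ a b : σ × ℕ, pderiv a (pderiv b (X s : MvPolynomial (σ × ℕ) F)) = 0 := by
      intro a b
      rw [pderiv_X]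
      rcases eq_or_ne s b with rfl | hne
      · simp
      · simp [Pi.single_eq_of_ne hne]
    simp only [pderiv_mul, map_add, hf, hz]
    ring

lemma pderiv_bound (f : MvPolynomial (σ × ℕ) F) :
    ∃ N : ℕ, ∀ (p : σ) (n : ℕ), N ≤ n → pderiv (p, n) f = 0 := by
  classical
  refine ⟨(f.vars.sup Prod.snd) + 1, fun p n hn => ?_⟩
  apply pderiv_eq_zero_of_notMem_vars
  intro hmem
  have := Finset.le_sup (f := Prod.snd) hmem
  simp only at this
  omega

lemma shift_sum {M : Type} [AddCommMonoid M] (f : ℕ → M) (k B A : ℕ)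
    (hkA : k ≤ A) (hBA : B + k ≤ A)
    (h0 : ∀ n, n < k → f n = 0) (h1 : ∀ r, B ≤ r → f (k + r) = 0) :
    ∑ n ∈ range A, f n = ∑ r ∈ range A, f (k + r) := by
  have e1 : ∑ n ∈ range A, f n = ∑ i ∈ Ico k A, f i := by
    rw [range_eq_Ico, ← Finset.sum_Ico_consecutive f (Nat.zero_le k) hkA,
      show (∑ i ∈ Ico 0 k, f i) = 0 from
        Finset.sum_eq_zero fun n hn => h0 n (by simpa using (Finset.mem_Ico.1 hn).2),
      zero_add]
  have e2 : ∑ i ∈ Ico k A, f i = ∑ i ∈ range (A - k), f (k + i) :=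
    Finset.sum_Ico_eq_sum_range f k A
  rw [e1, e2]
  apply Finset.sum_subset (Finset.range_subset_range.2 (by omega))
  intro r _ hr
  rw [Finset.mem_range] at hr
  exact h1 r (by omega)

omit [DecidableEq σ] in
lemma varDer_eq_sum {h : MvPolynomial (σ × ℕ) F} {N : ℕ}
    (hN : ∀ (p : σ) (m : ℕ), N ≤ m → pderiv (p, m) h = 0) (p : σ) :
    varDer F σ h p
      = ∑ m ∈ range N, (-1 : ℤ) ^ m • ((Del F σ).toLinearMap ^ m) (pderiv (p, m) h) := by
  rw [varDer, finsum_eq_sum_of_support_subset _ (s := range N)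
    (by
      intro n hn
      simp only [Function.mem_support] at hn
      by_contra hc
      simp only [Finset.coe_range, Set.mem_Iio, not_lt] at hc
      exact hn (by rw [hN p n hc, map_zero]))]
  exact Finset.sum_congr rfl fun m _ => neg_del_pow_apply m _

lemma pderiv_varDer {h : MvPolynomial (σ × ℕ) F} {N : ℕ}
    (hN : ∀ (p : σ) (m : ℕ), N ≤ m → pderiv (p, m) h = 0) (p p' : σ) (n : ℕ) :
    pderiv (p, n) (varDer F σ h p')
      = ∑ m ∈ range N, ∑ k ∈ range N, ((-1 : ℤ) ^ m * (m.choose k)) •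
          ((Del F σ).toLinearMap ^ (m - k)) (pd p n k (pderiv (p', m) h)) := by
  rw [varDer_eq_sum hN p', map_sum]
  refine Finset.sum_congr rfl fun m hm => ?_
  rw [mem_range] at hm
  rw [map_zsmul, pderiv_del_pow]
  rw [Finset.smul_sum]
  rw [Finset.sum_subset (Finset.range_subset_range.2 (by omega : m + 1 ≤ N))
    (fun k _ hk => by
      rw [mem_range, not_lt] at hk
      rw [Nat.choose_eq_zero_of_lt (by omega), Nat.cast_zero, zero_smul, smul_zero])]
  exact Finset.sum_congr rfl fun k _ => by rw [smul_smul]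

lemma star_LHS {h : MvPolynomial (σ × ℕ) F} {M : ℕ} (i j : σ)
    (hN : ∀ (p : σ) (m : ℕ), M ≤ m → pderiv (p, m) h = 0)
    {s : ℕ} (hs : s < M) :
    pderiv (j, s) (varDer F σ h i)
      = ∑ r ∈ range M, ∑ m ∈ range M,
          ((-1 : ℤ) ^ r * (if m ≤ s then (r.choose (s - m) : ℤ) else 0)) •
            ((Del F σ).toLinearMap ^ ((r + m) - s)) (pderiv (i, r) (pderiv (j, m) h)) := by
  rw [pderiv_varDer hN j i s]
  refine Finset.sum_congr rfl fun r _ => ?_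
  have stepA : ∀ k ∈ range M,
      ((-1 : ℤ) ^ r * (r.choose k)) •
          ((Del F σ).toLinearMap ^ (r - k)) (pd j s k (pderiv (i, r) h))
      = (if k ≤ s then
          ((-1 : ℤ) ^ r * (r.choose (s - (s - k)) : ℤ)) •
            ((Del F σ).toLinearMap ^ ((r + (s - k)) - s))
              (pderiv (i, r) (pderiv (j, s - k) h)) else 0) := by
    intro k _
    by_cases hk : k ≤ s
    · rw [if_pos hk]
      rw [show pd j s k (pderiv (i, r) h) = pderiv (j, s - k) (pderiv (i, r) h) from
        if_pos hk]
      rw [pderiv_pderiv_comm, show s - (s - k) = k by omega, show (r + (s - k)) - s = r - k by omega]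
    · rw [if_neg hk, show pd j s k (pderiv (i, r) h) = 0 from if_neg hk, map_zero, smul_zero]
  rw [Finset.sum_congr rfl stepA]
  rw [← Finset.sum_subset (Finset.range_subset_range.2 (by omega : s + 1 ≤ M))
    (fun k _ hk => by rw [if_neg (by rw [mem_range] at hk; omega)])]
  have stepB : ∀ k ∈ range (s + 1),
      (if k ≤ s then
          ((-1 : ℤ) ^ r * (r.choose (s - (s - k)) : ℤ)) •
            ((Del F σ).toLinearMap ^ ((r + (s - k)) - s))
              (pderiv (i, r) (pderiv (j, s - k) h)) else 0)
      = (fun m => ((-1 : ℤ) ^ r * (r.choose (s - m) : ℤ)) •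
            ((Del F σ).toLinearMap ^ ((r + m) - s))
              (pderiv (i, r) (pderiv (j, m) h))) (s - k) := by
    intro k hk
    rw [mem_range] at hk
    rw [if_pos (by omega)]
  rw [Finset.sum_congr rfl stepB]
  have stepC := Finset.sum_range_reflect
    (fun m => ((-1 : ℤ) ^ r * (r.choose (s - m) : ℤ)) •
            ((Del F σ).toLinearMap ^ ((r + m) - s))
              (pderiv (i, r) (pderiv (j, m) h))) (s + 1)
  simp only [Nat.add_sub_cancel] at stepC
  rw [stepC]
  have stepD : ∀ m ∈ range (s + 1),
      ((-1 : ℤ) ^ r * (r.choose (s - m) : ℤ)) •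
          ((Del F σ).toLinearMap ^ ((r + m) - s)) (pderiv (i, r) (pderiv (j, m) h))
      = ((-1 : ℤ) ^ r * (if m ≤ s then (r.choose (s - m) : ℤ) else 0)) •
          ((Del F σ).toLinearMap ^ ((r + m) - s)) (pderiv (i, r) (pderiv (j, m) h)) := by
    intro m hm
    rw [mem_range] at hm
    rw [if_pos (by omega)]
  rw [Finset.sum_congr rfl stepD]
  exact Finset.sum_subset (Finset.range_subset_range.2 (by omega : s + 1 ≤ M))
    (fun m _ hm => by
      rw [mem_range, not_lt] at hm
      rw [if_neg (by omega), mul_zero, zero_smul])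

lemma neg_one_pow_shift (r m : ℕ) (t : ℤ) :
    ((-1 : ℤ) ^ (r + m)) * ((-1) ^ m * t) = (-1) ^ r * t := by
  have h2 : ((-1 : ℤ) ^ m) * ((-1) ^ m) = 1 := by
    rw [← pow_add, ← two_mul, pow_mul]; norm_num
  rw [pow_add]
  linear_combination ((-1 : ℤ) ^ r * t) * h2

lemma star_RHS {h : MvPolynomial (σ × ℕ) F} {M : ℕ} (i j : σ)
    (hN : ∀ (p : σ) (m : ℕ), M ≤ m → pderiv (p, m) h = 0)
    (hM2 : ∀ (a b : σ) (m q : ℕ), M ≤ q → pderiv (a, q) (pderiv (b, m) h) = 0)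
    {s : ℕ} (hs : s < M) :
    ∑ n ∈ range (2 * M), ((-1 : ℤ) ^ n * (n.choose s)) •
        ((Del F σ).toLinearMap ^ (n - s)) (pderiv (i, n) (varDer F σ h j))
      = ∑ r ∈ range M, ∑ m ∈ range M,
          ((-1 : ℤ) ^ r * (if m ≤ s then (r.choose (s - m) : ℤ) else 0)) •
            ((Del F σ).toLinearMap ^ ((r + m) - s)) (pderiv (i, r) (pderiv (j, m) h)) := by
  have pow_comp : ∀ (a b : ℕ) (x : MvPolynomial (σ × ℕ) F),
      ((Del F σ).toLinearMap ^ a) (((Del F σ).toLinearMap ^ b) x)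
        = ((Del F σ).toLinearMap ^ (a + b)) x := fun a b x => by
    rw [← Module.End.mul_apply, ← pow_add]
  -- Step 1: expand the inner variational derivative
  have step1 : ∀ n ∈ range (2 * M),
      ((-1 : ℤ) ^ n * (n.choose s)) •
        ((Del F σ).toLinearMap ^ (n - s)) (pderiv (i, n) (varDer F σ h j))
      = ∑ m ∈ range M, ∑ k ∈ range M,
          (((-1 : ℤ) ^ n * (n.choose s)) * ((-1 : ℤ) ^ m * (m.choose k))) •
            ((Del F σ).toLinearMap ^ ((n - s) + (m - k))) (pd i n k (pderiv (j, m) h)) := by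
    intro n _
    rw [pderiv_varDer hN i j n, map_sum, Finset.smul_sum]
    refine Finset.sum_congr rfl fun m _ => ?_
    rw [map_sum, Finset.smul_sum]
    refine Finset.sum_congr rfl fun k _ => ?_
    rw [map_zsmul, pow_comp, smul_smul]
  rw [Finset.sum_congr rfl step1]
  rw [Finset.sum_comm (s := range (2 * M)) (t := range M)
    (f := fun n m => ∑ k ∈ range M,
      (((-1 : ℤ) ^ n * (n.choose s)) * ((-1 : ℤ) ^ m * (m.choose k))) •
        ((Del F σ).toLinearMap ^ ((n - s) + (m - k))) (pd i n k (pderiv (j, m) h)))]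
  -- now : ∑ m ∑ n ∑ k
  have step2 : ∀ m ∈ range M,
      (∑ n ∈ range (2 * M), ∑ k ∈ range M,
        (((-1 : ℤ) ^ n * (n.choose s)) * ((-1 : ℤ) ^ m * (m.choose k))) •
          ((Del F σ).toLinearMap ^ ((n - s) + (m - k))) (pd i n k (pderiv (j, m) h)))
      = ∑ r ∈ range M,
          ((-1 : ℤ) ^ r * (if m ≤ s then (r.choose (s - m) : ℤ) else 0)) •
            ((Del F σ).toLinearMap ^ ((r + m) - s)) (pderiv (i, r) (pderiv (j, m) h)) := by
    intro m hm
    rw [mem_range] at hm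
    rw [Finset.sum_comm]
    -- now : ∑ k ∑ n ; shift n by k
    have step3 : ∀ k ∈ range M,
        (∑ n ∈ range (2 * M),
          (((-1 : ℤ) ^ n * (n.choose s)) * ((-1 : ℤ) ^ m * (m.choose k))) •
            ((Del F σ).toLinearMap ^ ((n - s) + (m - k))) (pd i n k (pderiv (j, m) h)))
        = ∑ r ∈ range (2 * M),
            ((-1 : ℤ) ^ (r + m)) • (((-1 : ℤ) ^ k * (m.choose k) * ((r + k).choose s)) •
              ((Del F σ).toLinearMap ^ ((r + m) - s)) (pderiv (i, r) (pderiv (j, m) h))) := by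
      intro k hk
      rw [mem_range] at hk
      rw [shift_sum _ k M (2 * M) (by omega) (by omega)
        (fun n hn => by
          rw [show pd i n k (pderiv (j, m) h) = 0 from if_neg (by omega), map_zero, smul_zero])
        (fun r hr => by
          rw [show pd i (k + r) k (pderiv (j, m) h) = pderiv (i, k + r - k) (pderiv (j, m) h)
              from if_pos (Nat.le_add_right k r),
            Nat.add_sub_cancel_left, hM2 i j m r hr, map_zero, smul_zero])]
      refine Finset.sum_congr rfl fun r _ => ?_
      rw [show pd i (k + r) k (pderiv (j, m) h) = pderiv (i, k + r - k) (pderiv (j, m) h)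
          from if_pos (Nat.le_add_right k r), Nat.add_sub_cancel_left]
      by_cases hks : s ≤ k + r
      · by_cases hkm : k ≤ m
        · rw [show (k + r - s) + (m - k) = (r + m) - s by omega, smul_smul]
          congr 1
          rw [show k + r = r + k by omega]
          simp only [pow_add]
          push_cast
          ring
        · rw [Nat.choose_eq_zero_of_lt (by omega : m < k)]
          simp
      · rw [Nat.choose_eq_zero_of_lt (by omega : k + r < s),
          Nat.choose_eq_zero_of_lt (by omega : r + k < s)]
        simp
    rw [Finset.sum_congr rfl step3, Finset.sum_comm]
    rw [← Finset.sum_subset (Finset.range_subset_range.2 (by omega : M ≤ 2 * M))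
      (fun r _ hr => Finset.sum_eq_zero fun k _ => by
        rw [mem_range, not_lt] at hr
        rw [hM2 i j m r hr, map_zero, smul_zero, smul_zero])]
    -- now : ∑ r ∑ k ; collapse k-sum with fin_diff
    refine Finset.sum_congr rfl fun r hr => ?_
    rw [← Finset.smul_sum, ← Finset.sum_smul]
    have collapse : (∑ k ∈ range M, (-1 : ℤ) ^ k * (m.choose k) * ((r + k).choose s))
        = (-1 : ℤ) ^ m * (if m ≤ s then (r.choose (s - m) : ℤ) else 0) := by
      rw [← Finset.sum_subset (Finset.range_subset_range.2 (by omega : m + 1 ≤ M))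
        (fun k _ hk => by
          rw [mem_range, not_lt] at hk
          rw [Nat.choose_eq_zero_of_lt (by omega : m < k)]
          push_cast
          rw [mul_zero, zero_mul])]
      exact fin_diff m r s
    rw [collapse, smul_smul, neg_one_pow_shift]
  rw [Finset.sum_congr rfl step2, Finset.sum_comm]

/-- For `ξ = δh/δu`, the Frechet derivative `D_ξ(∂)` is self-adjoint:
as operators on `V`, for all `i, j`,
`∑_n (∂ξ_i/∂u_j^(n)) ∂^n = ∑_n (-∂)^n ∘ (∂ξ_j/∂u_i^(n) ·)`. -/
theorem stmt11 (F : Type) [Field F] [CharZero F] (ℓ : ℕ)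
    (h : MvPolynomial (Fin ℓ × ℕ) F) (i j : Fin ℓ) (g : MvPolynomial (Fin ℓ × ℕ) F) :
    ∑ᶠ n : ℕ, MvPolynomial.pderiv (j, n) (varDer F (Fin ℓ) h i) *
        ((Del F (Fin ℓ)).toLinearMap ^ n) g
      = ∑ᶠ n : ℕ, ((-(Del F (Fin ℓ)).toLinearMap) ^ n)
          (MvPolynomial.pderiv (i, n) (varDer F (Fin ℓ) h j) * g) := by
  classical
  obtain ⟨N, hNh⟩ := pderiv_bound h
  choose c hc using fun bm : Fin ℓ × ℕ => pderiv_bound (pderiv bm h)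
  obtain ⟨Ni, hNi⟩ := pderiv_bound (varDer F (Fin ℓ) h i)
  obtain ⟨Nj, hNj⟩ := pderiv_bound (varDer F (Fin ℓ) h j)
  obtain ⟨Q, hQ⟩ : ∃ Q, Q = (Finset.univ (α := Fin ℓ) ×ˢ range N).sup c := ⟨_, rfl⟩
  obtain ⟨M, hM⟩ : ∃ M, M = N + Q + Ni + Nj + 1 := ⟨_, rfl⟩
  have hN' : ∀ (p : Fin ℓ) (m : ℕ), M ≤ m → pderiv (p, m) h = 0 :=
    fun p m hm => hNh p m (by omega)
  have hM2 : ∀ (a b : Fin ℓ) (m q : ℕ), M ≤ q → pderiv (a, q) (pderiv (b, m) h) = 0 := by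
    intro a b m q hq
    by_cases hm : m < N
    · refine hc (b, m) a q ?_
      have hmem : (b, m) ∈ Finset.univ (α := Fin ℓ) ×ˢ range N := by
        simp [Finset.mem_product, mem_range, hm]
      have := Finset.le_sup (f := c) hmem
      omega
    · rw [hNh b m (by omega), map_zero]
  have hMξi : ∀ (p : Fin ℓ) (n : ℕ), M ≤ n → pderiv (p, n) (varDer F (Fin ℓ) h i) = 0 :=
    fun p n hn => hNi p n (by omega)
  have hMξj : ∀ (p : Fin ℓ) (n : ℕ), M ≤ n → pderiv (p, n) (varDer F (Fin ℓ) h j) = 0 :=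
    fun p n hn => hNj p n (by omega)
  have key : ∀ s : ℕ, s < M →
      pderiv (j, s) (varDer F (Fin ℓ) h i)
        = ∑ n ∈ range (2 * M), ((-1 : ℤ) ^ n * (n.choose s)) •
            ((Del F (Fin ℓ)).toLinearMap ^ (n - s)) (pderiv (i, n) (varDer F (Fin ℓ) h j)) :=
    fun s hs => (star_LHS i j hN' hs).trans (star_RHS i j hN' hM2 hs).symm
  calc
    ∑ᶠ n : ℕ, pderiv (j, n) (varDer F (Fin ℓ) h i) * ((Del F (Fin ℓ)).toLinearMap ^ n) g
        = ∑ s ∈ range M, pderiv (j, s) (varDer F (Fin ℓ) h i) *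
            ((Del F (Fin ℓ)).toLinearMap ^ s) g := by
          refine finsum_eq_sum_of_support_subset _ ?_
          intro n hn
          simp only [Function.mem_support] at hn
          by_contra hcn
          simp only [Finset.coe_range, Set.mem_Iio, not_lt] at hcn
          exact hn (by rw [hMξi j n hcn, zero_mul])
    _ = ∑ s ∈ range M, ∑ n ∈ range (2 * M), ((-1 : ℤ) ^ n * (n.choose s)) •
          (((Del F (Fin ℓ)).toLinearMap ^ (n - s)) (pderiv (i, n) (varDer F (Fin ℓ) h j)) *
            ((Del F (Fin ℓ)).toLinearMap ^ s) g) := by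
          refine Finset.sum_congr rfl fun s hs => ?_
          rw [key s (mem_range.1 hs), Finset.sum_mul]
          exact Finset.sum_congr rfl fun n _ => smul_mul_assoc _ _ _
    _ = ∑ s ∈ range (2 * M), ∑ n ∈ range (2 * M), ((-1 : ℤ) ^ n * (n.choose s)) •
          (((Del F (Fin ℓ)).toLinearMap ^ (n - s)) (pderiv (i, n) (varDer F (Fin ℓ) h j)) *
            ((Del F (Fin ℓ)).toLinearMap ^ s) g) := by
          refine Finset.sum_subset (Finset.range_subset_range.2 (by omega)) ?_
          intro s _ hs
          rw [mem_range, not_lt] at hs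
          refine Finset.sum_eq_zero fun n hn => ?_
          rw [mem_range] at hn
          by_cases hns : s ≤ n
          · rw [hMξj i n (by omega), map_zero, zero_mul, smul_zero]
          · rw [Nat.choose_eq_zero_of_lt (by omega), Nat.cast_zero, mul_zero, zero_smul]
    _ = ∑ n ∈ range (2 * M), ∑ s ∈ range (2 * M), ((-1 : ℤ) ^ n * (n.choose s)) •
          (((Del F (Fin ℓ)).toLinearMap ^ (n - s)) (pderiv (i, n) (varDer F (Fin ℓ) h j)) *
            ((Del F (Fin ℓ)).toLinearMap ^ s) g) := Finset.sum_comm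
    _ = ∑ n ∈ range (2 * M), ∑ s ∈ range (n + 1), ((-1 : ℤ) ^ n * (n.choose s)) •
          (((Del F (Fin ℓ)).toLinearMap ^ (n - s)) (pderiv (i, n) (varDer F (Fin ℓ) h j)) *
            ((Del F (Fin ℓ)).toLinearMap ^ s) g) := by
          refine Finset.sum_congr rfl fun n hn => ?_
          rw [mem_range] at hn
          refine (Finset.sum_subset (Finset.range_subset_range.2 (by omega)) ?_).symm
          intro s _ hs
          rw [mem_range, not_lt] at hs
          rw [Nat.choose_eq_zero_of_lt (by omega), Nat.cast_zero, mul_zero, zero_smul]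
    _ = ∑ n ∈ range (2 * M), ((-1 : ℤ) ^ n) • (((Del F (Fin ℓ)).toLinearMap ^ n)
          (pderiv (i, n) (varDer F (Fin ℓ) h j) * g)) := by
          refine Finset.sum_congr rfl fun n _ => ?_
          rw [del_pow_mul n, Finset.smul_sum]
          exact Finset.sum_congr rfl fun s _ => by rw [smul_smul]
    _ = ∑ n ∈ range (2 * M), ((-(Del F (Fin ℓ)).toLinearMap) ^ n)
          (pderiv (i, n) (varDer F (Fin ℓ) h j) * g) :=
          Finset.sum_congr rfl fun n _ => (neg_del_pow_apply n _).symm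
    _ = ∑ᶠ n : ℕ, ((-(Del F (Fin ℓ)).toLinearMap) ^ n)
          (pderiv (i, n) (varDer F (Fin ℓ) h j) * g) := by
          refine (finsum_eq_sum_of_support_subset _ ?_).symm
          intro n hn
          simp only [Function.mem_support] at hn
          by_contra hcn
          simp only [Finset.coe_range, Set.mem_Iio, not_lt] at hcn
          exact hn (by rw [hMξj i n (by omega), zero_mul, map_zero])
end

section
/- Let V be an algebra of differential polynomials and H ∈ Mat_{ℓ×ℓ} V((∂^{-1})). The λ-bracket defined by the Master Formula satisfies the left Leibniz rule {f_λ gh} = {f_λ g}h + {f_λ h}g for all f, g, h ∈ V, and the recovery property that the symbol of {u_i ∂ u_j}_H (with ∂ moved to the right) equals H_{ji}(∂). -/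
/-- The λ-bracket `{f_λ g}_H ∈ V((λ^{-1}))` of the Master Formula
`{f_λ g}_H = ∑_{i,j,m,n} (∂g/∂u_j^(n)) (λ+∂)^n H_{ji}(λ+∂) (-λ-∂)^m (∂f/∂u_i^(m))`,
for a matrix pseudodifferential operator `H` with coefficients `H j i N` (the
coefficient of `∂^N`, `N ∈ ℤ`, of `H_{ji}`). The value is the coefficient function
`p ↦` (coefficient of `λ^p`), obtained by expanding all powers of `λ + ∂` (with
generalized binomial coefficients for the integer powers coming from `H`). -/
noncomputable def lambdaBracket (F : Type) [Field F] (ℓ : ℕ)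
    (H : Fin ℓ → Fin ℓ → ℤ → MvPolynomial (Fin ℓ × ℕ) F)
    (f g : MvPolynomial (Fin ℓ × ℕ) F) : ℤ → MvPolynomial (Fin ℓ × ℕ) F :=
  fun p =>
    ∑ᶠ (i : Fin ℓ) (j : Fin ℓ) (n : ℕ) (m : ℕ) (N : ℤ) (k₁ : ℕ) (k₃ : ℕ),
      if 0 ≤ (n : ℤ) + N + m - k₁ - k₃ - p then
        (((-1 : F) ^ m * (n.choose k₁ : F) * (m.choose k₃ : F)) *
            ((Ring.choose N ((n : ℤ) + N + m - k₁ - k₃ - p).toNat : ℤ) : F)) •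
          (MvPolynomial.pderiv (j, n) g *
            ((Del F (Fin ℓ)).toLinearMap ^ k₁)
              (H j i N *
                ((Del F (Fin ℓ)).toLinearMap ^ ((n : ℤ) + N + m - k₁ - k₃ - p).toNat)
                  (((Del F (Fin ℓ)).toLinearMap ^ k₃) (MvPolynomial.pderiv (i, m) f))))
      else 0


noncomputable def lbTerm (F : Type) [Field F] (ℓ : ℕ)
    (H : Fin ℓ → Fin ℓ → ℤ → MvPolynomial (Fin ℓ × ℕ) F)
    (f g : MvPolynomial (Fin ℓ × ℕ) F) (p : ℤ) (i j : Fin ℓ) (n m : ℕ) (N : ℤ)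
    (k₁ k₃ : ℕ) : MvPolynomial (Fin ℓ × ℕ) F :=
  if 0 ≤ (n : ℤ) + N + m - k₁ - k₃ - p then
    (((-1 : F) ^ m * (n.choose k₁ : F) * (m.choose k₃ : F)) *
        ((Ring.choose N ((n : ℤ) + N + m - k₁ - k₃ - p).toNat : ℤ) : F)) •
      (MvPolynomial.pderiv (j, n) g *
        ((Del F (Fin ℓ)).toLinearMap ^ k₁)
          (H j i N *
            ((Del F (Fin ℓ)).toLinearMap ^ ((n : ℤ) + N + m - k₁ - k₃ - p).toNat)
              (((Del F (Fin ℓ)).toLinearMap ^ k₃) (MvPolynomial.pderiv (i, m) f))))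
  else 0

variable {F : Type} [Field F] {ℓ : ℕ}
  {H : Fin ℓ → Fin ℓ → ℤ → MvPolynomial (Fin ℓ × ℕ) F}
  {f g h : MvPolynomial (Fin ℓ × ℕ) F} {p N : ℤ} {i j : Fin ℓ} {n m k₁ k₃ : ℕ}

lemma lb_eq : lambdaBracket F ℓ H f g p
    = ∑ᶠ (i : Fin ℓ) (j : Fin ℓ) (n : ℕ) (m : ℕ) (N : ℤ) (k₁ : ℕ) (k₃ : ℕ),
        lbTerm F ℓ H f g p i j n m N k₁ k₃ := rfl

lemma lbTerm_zero_k3 (hk : m < k₃) : lbTerm F ℓ H f g p i j n m N k₁ k₃ = 0 := by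
  simp [lbTerm, Nat.choose_eq_zero_of_lt hk]

lemma lbTerm_zero_k1 (hk : n < k₁) : lbTerm F ℓ H f g p i j n m N k₁ k₃ = 0 := by
  simp [lbTerm, Nat.choose_eq_zero_of_lt hk]

lemma lbTerm_zero_H (hh : H j i N = 0) : lbTerm F ℓ H f g p i j n m N k₁ k₃ = 0 := by
  simp [lbTerm, hh]

lemma lbTerm_zero_lt (hk : (n : ℤ) + N + m < p + k₁ + k₃) :
    lbTerm F ℓ H f g p i j n m N k₁ k₃ = 0 := by
  rw [lbTerm, if_neg (by omega)]

lemma lbTerm_zero_g (hg : MvPolynomial.pderiv (j, n) g = 0) :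
    lbTerm F ℓ H f g p i j n m N k₁ k₃ = 0 := by
  simp [lbTerm, hg]

lemma lbTerm_zero_f (hf : MvPolynomial.pderiv (i, m) f = 0) :
    lbTerm F ℓ H f g p i j n m N k₁ k₃ = 0 := by
  simp [lbTerm, hf]

lemma lbTerm_mul : lbTerm F ℓ H f (g * h) p i j n m N k₁ k₃
    = lbTerm F ℓ H f g p i j n m N k₁ k₃ * h + lbTerm F ℓ H f h p i j n m N k₁ k₃ * g := by
  unfold lbTerm
  split_ifs with hc
  · rw [MvPolynomial.pderiv_mul, add_mul, smul_add, smul_mul_assoc, smul_mul_assoc]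
    congr 1
    · congr 1; ring
    · congr 1; ring
  · simp

lemma finsum_mul'' {ι : Type*} {R : Type*} [CommRing R] [NoZeroDivisors R]
    (f : ι → R) (c : R) : (∑ᶠ x, f x) * c = ∑ᶠ x, f x * c := by
  rcases eq_or_ne c 0 with rfl | hc
  · simp
  by_cases hfin : (Function.support f).Finite
  · exact finsum_mul f c
  · have hs : (Function.support fun x => f x * c) = Function.support f := by
      ext x; simp [Function.mem_support, mul_eq_zero, hc]
    rw [finsum_of_infinite_support hfin, zero_mul,
      finsum_of_infinite_support (by rw [hs]; exact hfin)]

lemma finite_pderiv_set {σ R : Type*} [CommSemiring R] (x : σ) (q : MvPolynomial (σ × ℕ) R) :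
    Set.Finite {n : ℕ | MvPolynomial.pderiv (x, n) q ≠ 0} := by
  have : {n : ℕ | MvPolynomial.pderiv (x, n) q ≠ 0} ⊆ (fun n => (x, n)) ⁻¹' ↑q.vars := by
    intro n hn
    simp only [Set.mem_setOf_eq] at hn
    by_contra hmem
    exact hn (MvPolynomial.pderiv_eq_zero_of_notMem_vars hmem)
  exact (Set.Finite.preimage (Function.Injective.injOn (fun a b hab => by
    simpa using hab)) (q.vars.finite_toSet)).subset this


lemma nest_k3 {c : MvPolynomial (Fin ℓ × ℕ) F}
    (hall : ∀ k₃ : ℕ, lbTerm F ℓ H f g p i j n m N k₁ k₃ = 0) :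
    ∑ᶠ (k₃ : ℕ), lbTerm F ℓ H f g p i j n m N k₁ k₃ * c = 0 := by
  have h2 : ∀ k₃ : ℕ, lbTerm F ℓ H f g p i j n m N k₁ k₃ * c = 0 :=
    fun k₃ => by rw [hall k₃, zero_mul]
  simp only [h2, finsum_zero]

lemma nest_k1k3 {c : MvPolynomial (Fin ℓ × ℕ) F}
    (hall : ∀ k₁ k₃ : ℕ, lbTerm F ℓ H f g p i j n m N k₁ k₃ = 0) :
    ∑ᶠ (k₁ : ℕ) (k₃ : ℕ), lbTerm F ℓ H f g p i j n m N k₁ k₃ * c = 0 := by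
  have h2 : ∀ k₁ k₃ : ℕ, lbTerm F ℓ H f g p i j n m N k₁ k₃ * c = 0 :=
    fun k₁ k₃ => by rw [hall k₁ k₃, zero_mul]
  simp only [h2, finsum_zero]

lemma nest_Nk {c : MvPolynomial (Fin ℓ × ℕ) F}
    (hall : ∀ (N : ℤ) (k₁ k₃ : ℕ), lbTerm F ℓ H f g p i j n m N k₁ k₃ = 0) :
    ∑ᶠ (N : ℤ) (k₁ : ℕ) (k₃ : ℕ), lbTerm F ℓ H f g p i j n m N k₁ k₃ * c = 0 := by
  have h2 : ∀ (N : ℤ) (k₁ k₃ : ℕ), lbTerm F ℓ H f g p i j n m N k₁ k₃ * c = 0 :=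
    fun N k₁ k₃ => by rw [hall N k₁ k₃, zero_mul]
  simp only [h2, finsum_zero]

lemma nest_mNk {c : MvPolynomial (Fin ℓ × ℕ) F}
    (hall : ∀ (m : ℕ) (N : ℤ) (k₁ k₃ : ℕ), lbTerm F ℓ H f g p i j n m N k₁ k₃ = 0) :
    ∑ᶠ (m : ℕ) (N : ℤ) (k₁ : ℕ) (k₃ : ℕ), lbTerm F ℓ H f g p i j n m N k₁ k₃ * c = 0 := by
  have h2 : ∀ (m : ℕ) (N : ℤ) (k₁ k₃ : ℕ), lbTerm F ℓ H f g p i j n m N k₁ k₃ * c = 0 :=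
    fun m N k₁ k₃ => by rw [hall m N k₁ k₃, zero_mul]
  simp only [h2, finsum_zero]

lemma lb_mul (c : MvPolynomial (Fin ℓ × ℕ) F) : lambdaBracket F ℓ H f g p * c
    = ∑ᶠ (i : Fin ℓ) (j : Fin ℓ) (n : ℕ) (m : ℕ) (N : ℤ) (k₁ : ℕ) (k₃ : ℕ),
        lbTerm F ℓ H f g p i j n m N k₁ k₃ * c := by
  rw [lb_eq]
  simp only [finsum_mul'']

variable {g₁ g₂ : MvPolynomial (Fin ℓ × ℕ) F} {c₁ c₂ : MvPolynomial (Fin ℓ × ℕ) F}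

lemma step_k3 : ∑ᶠ (k₃ : ℕ), (lbTerm F ℓ H f g₁ p i j n m N k₁ k₃ * c₁
      + lbTerm F ℓ H f g₂ p i j n m N k₁ k₃ * c₂)
    = (∑ᶠ (k₃ : ℕ), lbTerm F ℓ H f g₁ p i j n m N k₁ k₃ * c₁)
      + ∑ᶠ (k₃ : ℕ), lbTerm F ℓ H f g₂ p i j n m N k₁ k₃ * c₂ := by
  apply finsum_add_distrib <;>
  · refine (Set.finite_Iic m).subset fun k₃ hk => ?_
    simp only [Function.mem_support] at hk
    by_contra hle
    exact hk (by rw [lbTerm_zero_k3 (by simpa using hle), zero_mul])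

lemma step_k1 : ∑ᶠ (k₁ : ℕ) (k₃ : ℕ), (lbTerm F ℓ H f g₁ p i j n m N k₁ k₃ * c₁
      + lbTerm F ℓ H f g₂ p i j n m N k₁ k₃ * c₂)
    = (∑ᶠ (k₁ : ℕ) (k₃ : ℕ), lbTerm F ℓ H f g₁ p i j n m N k₁ k₃ * c₁)
      + ∑ᶠ (k₁ : ℕ) (k₃ : ℕ), lbTerm F ℓ H f g₂ p i j n m N k₁ k₃ * c₂ := by
  rw [finsum_congr fun k₁ => step_k3]
  apply finsum_add_distrib <;>
  · refine (Set.finite_Iic n).subset fun k₁ hk => ?_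
    simp only [Function.mem_support] at hk
    by_contra hle
    exact hk (nest_k3 fun k₃ => lbTerm_zero_k1 (by simpa using hle))

lemma step_N {M : ℤ} (hb : ∀ N : ℤ, M < N → H j i N = 0) :
    ∑ᶠ (N : ℤ) (k₁ : ℕ) (k₃ : ℕ), (lbTerm F ℓ H f g₁ p i j n m N k₁ k₃ * c₁
      + lbTerm F ℓ H f g₂ p i j n m N k₁ k₃ * c₂)
    = (∑ᶠ (N : ℤ) (k₁ : ℕ) (k₃ : ℕ), lbTerm F ℓ H f g₁ p i j n m N k₁ k₃ * c₁)
      + ∑ᶠ (N : ℤ) (k₁ : ℕ) (k₃ : ℕ), lbTerm F ℓ H f g₂ p i j n m N k₁ k₃ * c₂ := by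
  rw [finsum_congr fun N => step_k1]
  apply finsum_add_distrib <;>
  · refine (Set.finite_Icc (p - n - m) M).subset fun N hk => ?_
    simp only [Function.mem_support] at hk
    by_contra hmem
    rcases lt_or_ge M N with hM | hM
    · exact hk (nest_k1k3 fun k₁ k₃ => lbTerm_zero_H (hb N hM))
    · have hlt : N < p - n - m := by
        simp only [Set.mem_Icc, not_and_or, not_le] at hmem
        omega
      exact hk (nest_k1k3 fun k₁ k₃ => lbTerm_zero_lt (by omega))

lemma step_m {M : ℤ} (hb : ∀ N : ℤ, M < N → H j i N = 0) :
    ∑ᶠ (m : ℕ) (N : ℤ) (k₁ : ℕ) (k₃ : ℕ), (lbTerm F ℓ H f g₁ p i j n m N k₁ k₃ * c₁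
      + lbTerm F ℓ H f g₂ p i j n m N k₁ k₃ * c₂)
    = (∑ᶠ (m : ℕ) (N : ℤ) (k₁ : ℕ) (k₃ : ℕ), lbTerm F ℓ H f g₁ p i j n m N k₁ k₃ * c₁)
      + ∑ᶠ (m : ℕ) (N : ℤ) (k₁ : ℕ) (k₃ : ℕ), lbTerm F ℓ H f g₂ p i j n m N k₁ k₃ * c₂ := by
  rw [finsum_congr fun m => step_N hb]
  apply finsum_add_distrib <;>
  · refine (finite_pderiv_set i f).subset fun m hk => ?_
    simp only [Function.mem_support] at hk
    by_contra hmem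
    have hz : MvPolynomial.pderiv (i, m) f = 0 := by
      by_contra hne; exact hmem hne
    exact hk (nest_Nk fun N k₁ k₃ => lbTerm_zero_f hz)

lemma step_n {M : ℤ} (hb : ∀ N : ℤ, M < N → H j i N = 0) :
    ∑ᶠ (n : ℕ) (m : ℕ) (N : ℤ) (k₁ : ℕ) (k₃ : ℕ), (lbTerm F ℓ H f g₁ p i j n m N k₁ k₃ * c₁
      + lbTerm F ℓ H f g₂ p i j n m N k₁ k₃ * c₂)
    = (∑ᶠ (n : ℕ) (m : ℕ) (N : ℤ) (k₁ : ℕ) (k₃ : ℕ), lbTerm F ℓ H f g₁ p i j n m N k₁ k₃ * c₁)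
      + ∑ᶠ (n : ℕ) (m : ℕ) (N : ℤ) (k₁ : ℕ) (k₃ : ℕ),
          lbTerm F ℓ H f g₂ p i j n m N k₁ k₃ * c₂ := by
  rw [finsum_congr fun n => step_m hb]
  apply finsum_add_distrib
  · refine (finite_pderiv_set j g₁).subset fun n hk => ?_
    simp only [Function.mem_support] at hk
    by_contra hmem
    have hz : MvPolynomial.pderiv (j, n) g₁ = 0 := by
      by_contra hne; exact hmem hne
    exact hk (nest_mNk fun m N k₁ k₃ => lbTerm_zero_g hz)
  · refine (finite_pderiv_set j g₂).subset fun n hk => ?_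
    simp only [Function.mem_support] at hk
    by_contra hmem
    have hz : MvPolynomial.pderiv (j, n) g₂ = 0 := by
      by_contra hne; exact hmem hne
    exact hk (nest_mNk fun m N k₁ k₃ => lbTerm_zero_g hz)

lemma step_ij {M : Fin ℓ → Fin ℓ → ℤ} (hb : ∀ j i, ∀ N : ℤ, M j i < N → H j i N = 0) :
    ∑ᶠ (i : Fin ℓ) (j : Fin ℓ) (n : ℕ) (m : ℕ) (N : ℤ) (k₁ : ℕ) (k₃ : ℕ),
        (lbTerm F ℓ H f g₁ p i j n m N k₁ k₃ * c₁
          + lbTerm F ℓ H f g₂ p i j n m N k₁ k₃ * c₂)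
    = (∑ᶠ (i : Fin ℓ) (j : Fin ℓ) (n : ℕ) (m : ℕ) (N : ℤ) (k₁ : ℕ) (k₃ : ℕ),
          lbTerm F ℓ H f g₁ p i j n m N k₁ k₃ * c₁)
      + ∑ᶠ (i : Fin ℓ) (j : Fin ℓ) (n : ℕ) (m : ℕ) (N : ℤ) (k₁ : ℕ) (k₃ : ℕ),
          lbTerm F ℓ H f g₂ p i j n m N k₁ k₃ * c₂ := by
  rw [finsum_congr fun i => finsum_congr fun j => step_n (hb j i)]
  rw [finsum_congr fun i => finsum_add_distrib (Set.toFinite _) (Set.toFinite _)]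
  exact finsum_add_distrib (Set.toFinite _) (Set.toFinite _)

lemma lb_leibniz {M : Fin ℓ → Fin ℓ → ℤ} (hb : ∀ j i, ∀ N : ℤ, M j i < N → H j i N = 0) :
    lambdaBracket F ℓ H f (g * h) p
      = lambdaBracket F ℓ H f g p * h + lambdaBracket F ℓ H f h p * g := by
  rw [lb_eq, lb_mul, lb_mul, ← step_ij hb]
  exact finsum_congr fun i => finsum_congr fun j => finsum_congr fun n =>
    finsum_congr fun m => finsum_congr fun N => finsum_congr fun k₁ =>
      finsum_congr fun k₃ => lbTerm_mul

lemma del_pow_one {t : ℕ} (ht : t ≠ 0) :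
    ((Del F (Fin ℓ)).toLinearMap ^ t) (1 : MvPolynomial (Fin ℓ × ℕ) F) = 0 := by
  obtain ⟨s, rfl⟩ := Nat.exists_eq_succ_of_ne_zero ht
  rw [pow_succ, Module.End.mul_apply]
  have h1 : (Del F (Fin ℓ)).toLinearMap (1 : MvPolynomial (Fin ℓ × ℕ) F) = 0 :=
    (Del F (Fin ℓ)).map_one_eq_zero
  rw [h1, map_zero]

lemma lb_recov [CharZero F] (i j : Fin ℓ) (p : ℤ) :
    lambdaBracket F ℓ H (MvPolynomial.X (i, 0)) (MvPolynomial.X (j, 0)) p = H j i p := by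
  set f : MvPolynomial (Fin ℓ × ℕ) F := MvPolynomial.X (i, 0) with hf
  set g : MvPolynomial (Fin ℓ × ℕ) F := MvPolynomial.X (j, 0) with hg
  rw [lb_eq]
  rw [finsum_eq_single _ i (fun i' hi' => by
    have hz : ∀ (j' : Fin ℓ) (n m : ℕ) (N : ℤ) (k₁ k₃ : ℕ),
        lbTerm F ℓ H f g p i' j' n m N k₁ k₃ = 0 := fun j' n m N k₁ k₃ =>
      lbTerm_zero_f (MvPolynomial.pderiv_X_of_ne (by simp [Ne.symm hi']))
    simp only [hz, finsum_zero])]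
  rw [finsum_eq_single _ j (fun j' hj' => by
    have hz : ∀ (n m : ℕ) (N : ℤ) (k₁ k₃ : ℕ),
        lbTerm F ℓ H f g p i j' n m N k₁ k₃ = 0 := fun n m N k₁ k₃ =>
      lbTerm_zero_g (MvPolynomial.pderiv_X_of_ne (by simp [Ne.symm hj']))
    simp only [hz, finsum_zero])]
  rw [finsum_eq_single _ 0 (fun n hn => by
    have hz : ∀ (m : ℕ) (N : ℤ) (k₁ k₃ : ℕ),
        lbTerm F ℓ H f g p i j n m N k₁ k₃ = 0 := fun m N k₁ k₃ =>
      lbTerm_zero_g (MvPolynomial.pderiv_X_of_ne (by simpa using Ne.symm hn))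
    simp only [hz, finsum_zero])]
  rw [finsum_eq_single _ 0 (fun m hm => by
    have hz : ∀ (N : ℤ) (k₁ k₃ : ℕ),
        lbTerm F ℓ H f g p i j 0 m N k₁ k₃ = 0 := fun N k₁ k₃ =>
      lbTerm_zero_f (MvPolynomial.pderiv_X_of_ne (by simpa using Ne.symm hm))
    simp only [hz, finsum_zero])]
  rw [finsum_eq_single _ p (fun N hN => by
    have hz : ∀ (k₁ k₃ : ℕ), lbTerm F ℓ H f g p i j 0 0 N k₁ k₃ = 0 := by
      intro k₁ k₃
      rcases Nat.eq_zero_or_pos k₁ with rfl | hk₁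
      · rcases Nat.eq_zero_or_pos k₃ with rfl | hk₃
        · rcases lt_or_gt_of_ne hN with hlt | hgt
          · exact lbTerm_zero_lt (by push_cast; omega)
          · rw [lbTerm]
            simp only [MvPolynomial.pderiv_X_self, pow_zero, Module.End.one_apply, hf]
            rw [del_pow_one (by push_cast; omega)]
            simp
        · exact lbTerm_zero_k3 hk₃
      · exact lbTerm_zero_k1 hk₁
    simp only [hz, finsum_zero])]
  rw [finsum_eq_single _ 0 (fun k₁ hk₁ => by
    have hz : ∀ k₃ : ℕ, lbTerm F ℓ H f g p i j 0 0 p k₁ k₃ = 0 := fun k₃ =>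
      lbTerm_zero_k1 (Nat.pos_of_ne_zero hk₁)
    simp only [hz, finsum_zero])]
  rw [finsum_eq_single _ 0 (fun k₃ hk₃ =>
    lbTerm_zero_k3 (Nat.pos_of_ne_zero hk₃))]
  rw [lbTerm]
  rw [if_pos (by push_cast; omega)]
  have he : ((0:ℕ) : ℤ) + p + ((0:ℕ) : ℤ) - ((0:ℕ) : ℤ) - ((0:ℕ) : ℤ) - p = 0 := by push_cast; ring
  simp [he, hf, hg, MvPolynomial.pderiv_X_self, Ring.choose_zero_right]

/-- The λ-bracket given by the Master Formula satisfies the left Leibniz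
rule `{f_λ gh} = {f_λ g} h + {f_λ h} g`, and the recovery property: the symbol of
`{u_i ∂ u_j}_H` (with `∂` moved to the right) equals `H_{ji}(∂)`, i.e. its coefficient
of `∂^p` is `H j i p` for all `p ∈ ℤ`. -/
theorem stmt17 (F : Type) [Field F] [CharZero F] (ℓ : ℕ)
    (H : Fin ℓ → Fin ℓ → ℤ → MvPolynomial (Fin ℓ × ℕ) F)
    (hH : ∀ j i, ∃ M : ℤ, ∀ N : ℤ, M < N → H j i N = 0) :
    (∀ (f g h : MvPolynomial (Fin ℓ × ℕ) F) (p : ℤ),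
      lambdaBracket F ℓ H f (g * h) p
        = lambdaBracket F ℓ H f g p * h + lambdaBracket F ℓ H f h p * g) ∧
    (∀ (i j : Fin ℓ) (p : ℤ),
      lambdaBracket F ℓ H (MvPolynomial.X (i, 0)) (MvPolynomial.X (j, 0)) p
        = H j i p) := by
  constructor
  · intro f g h p
    choose M hM using hH
    exact lb_leibniz hM
  · intro i j p
    exact lb_recov i j p
end
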